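/- Let 𝔛 be a Banach space and let 𝖠 ⊆ B(𝔛) be precompact and nonempty. Then ρ_χ(𝖠) = ρ_f(𝖠). -/

import Mathlib

open Filter Topology MeasureTheory

noncomputable section

variable {𝕏 : Type*} [NormedAddCommGroup 𝕏] [NormedSpace ℝ 𝕏] [CompleteSpace 𝕏]

/-- The spectral radius `ρ(A) = lim_k ‖A^k‖^{1/k}` (Gelfand limit). -/
def specRad {R : Type*} [NormedRing R] (A : R) : ℝ :=
  Filter.atTop.limsup fun k : ℕ => ‖A ^ k‖ ^ (1 / (k : ℝ))

/-- The set `𝖠ⁿ` of all products of `n` elements of `A`. -/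
def prods {R : Type*} [NormedRing R] (A : Set R) (n : ℕ) : Set R :=
  {P | ∃ f : Fin n → R, (∀ i, f i ∈ A) ∧ P = (List.ofFn f).prod}

/-- The Hausdorff measure of noncompactness `‖L‖_χ` of a bounded operator: the infimum of all
`ε > 0` such that the image of the unit ball under `L` admits a finite `ε`-net. -/
def hmnc (L : 𝕏 →L[ℝ] 𝕏) : ℝ :=
  sInf {ε : ℝ | 0 < ε ∧ ∃ S : Finset 𝕏,
    L '' Metric.closedBall 0 1 ⊆ ⋃ y ∈ S, Metric.ball y ε}

/-- `‖L‖_f`: the distance from `L` to the finite-rank operators. -/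
def fdist (L : 𝕏 →L[ℝ] 𝕏) : ℝ :=
  sInf {c : ℝ | ∃ K : 𝕏 →L[ℝ] 𝕏,
    FiniteDimensional ℝ (LinearMap.range (K : 𝕏 →ₗ[ℝ] 𝕏)) ∧ c = ‖L - K‖}

set_option linter.unusedSectionVars false

lemma hmnc_setNe (L : 𝕏 →L[ℝ] 𝕏) :
    Set.Nonempty {ε : ℝ | 0 < ε ∧ ∃ S : Finset 𝕏,
      L '' Metric.closedBall 0 1 ⊆ ⋃ y ∈ S, Metric.ball y ε} := by
  refine ⟨‖L‖ + 1, by positivity, {0}, ?_⟩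
  rintro z ⟨x, hx, rfl⟩
  have hx1 : ‖x‖ ≤ 1 := by simpa [Metric.mem_closedBall, dist_zero_right] using hx
  have h2 : ‖L x‖ ≤ ‖L‖ := by
    calc ‖L x‖ ≤ ‖L‖ * ‖x‖ := L.le_opNorm x
    _ ≤ ‖L‖ * 1 := mul_le_mul_of_nonneg_left hx1 (norm_nonneg L)
    _ = ‖L‖ := mul_one _
  simp only [Set.mem_iUnion, Finset.mem_singleton, Metric.mem_ball, dist_zero_right]
  exact ⟨0, ⟨rfl, by simpa using lt_of_le_of_lt h2 (by linarith)⟩⟩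

lemma hmnc_bddBelow (L : 𝕏 →L[ℝ] 𝕏) :
    BddBelow {ε : ℝ | 0 < ε ∧ ∃ S : Finset 𝕏,
      L '' Metric.closedBall 0 1 ⊆ ⋃ y ∈ S, Metric.ball y ε} :=
  ⟨0, fun x hx => le_of_lt hx.1⟩

lemma hmnc_nonneg (L : 𝕏 →L[ℝ] 𝕏) : 0 ≤ hmnc L :=
  le_csInf (hmnc_setNe L) fun x hx => le_of_lt hx.1

lemma hmnc_le {L : 𝕏 →L[ℝ] 𝕏} {ε : ℝ} (hε : 0 < ε) (S : Finset 𝕏)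
    (h : L '' Metric.closedBall 0 1 ⊆ ⋃ y ∈ S, Metric.ball y ε) : hmnc L ≤ ε :=
  csInf_le (hmnc_bddBelow L) ⟨hε, S, h⟩

lemma fdist_setNe (L : 𝕏 →L[ℝ] 𝕏) :
    Set.Nonempty {c : ℝ | ∃ K : 𝕏 →L[ℝ] 𝕏,
      FiniteDimensional ℝ (LinearMap.range (K : 𝕏 →ₗ[ℝ] 𝕏)) ∧ c = ‖L - K‖} := by
  refine ⟨‖L‖, 0, ?_, by simp⟩
  have : LinearMap.range ((0 : 𝕏 →L[ℝ] 𝕏) : 𝕏 →ₗ[ℝ] 𝕏) = ⊥ := by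
    simp
  rw [this]; infer_instance

lemma fdist_bddBelow (L : 𝕏 →L[ℝ] 𝕏) :
    BddBelow {c : ℝ | ∃ K : 𝕏 →L[ℝ] 𝕏,
      FiniteDimensional ℝ (LinearMap.range (K : 𝕏 →ₗ[ℝ] 𝕏)) ∧ c = ‖L - K‖} :=
  ⟨0, by rintro c ⟨K, _, rfl⟩; exact norm_nonneg _⟩

lemma fdist_nonneg (L : 𝕏 →L[ℝ] 𝕏) : 0 ≤ fdist L :=
  le_csInf (fdist_setNe L) (by rintro c ⟨K, _, rfl⟩; exact norm_nonneg _)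

lemma fdist_le_norm (L : 𝕏 →L[ℝ] 𝕏) : fdist L ≤ ‖L‖ := by
  apply csInf_le (fdist_bddBelow L)
  refine ⟨0, ?_, by simp⟩
  have : LinearMap.range ((0 : 𝕏 →L[ℝ] 𝕏) : 𝕏 →ₗ[ℝ] 𝕏) = ⊥ := by simp
  rw [this]; infer_instance

lemma fdist_le {L K : 𝕏 →L[ℝ] 𝕏}
    (hK : FiniteDimensional ℝ (LinearMap.range (K : 𝕏 →ₗ[ℝ] 𝕏))) : fdist L ≤ ‖L - K‖ :=
  csInf_le (fdist_bddBelow L) ⟨K, hK, rfl⟩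

lemma hmnc_le_fdist (L : 𝕏 →L[ℝ] 𝕏) : hmnc L ≤ fdist L := by
  refine le_csInf (fdist_setNe L) ?_
  rintro c ⟨K, hK, rfl⟩
  refine le_of_forall_pos_le_add fun ε hε => ?_
  -- the image of the closed unit ball under K is totally bounded
  set V := LinearMap.range (K : 𝕏 →ₗ[ℝ] 𝕏)
  haveI : FiniteDimensional ℝ V := hK
  have hcomp : IsCompact ((Subtype.val '' (Metric.closedBall (0 : V) (‖K‖ + 1)))) :=
    (isCompact_closedBall _ _).image continuous_subtype_val
  have htb : TotallyBounded ((Subtype.val '' (Metric.closedBall (0 : V) (‖K‖ + 1)))) :=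
    hcomp.totallyBounded
  rw [Metric.totallyBounded_iff] at htb
  obtain ⟨t, htf, htcov⟩ := htb ε hε
  refine le_trans (hmnc_le (ε := ‖L - K‖ + ε) (by positivity) htf.toFinset ?_) le_rfl
  rintro z ⟨x, hx, rfl⟩
  have hx1 : ‖x‖ ≤ 1 := by simpa [Metric.mem_closedBall, dist_zero_right] using hx
  have hKx : K x ∈ (Subtype.val '' (Metric.closedBall (0 : V) (‖K‖ + 1))) := by
    refine ⟨⟨K x, LinearMap.mem_range_self _ x⟩, ?_, rfl⟩
    simp only [Metric.mem_closedBall, dist_zero_right]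
    calc ‖(⟨K x, _⟩ : V)‖ = ‖K x‖ := rfl
    _ ≤ ‖K‖ * ‖x‖ := K.le_opNorm x
    _ ≤ ‖K‖ * 1 := mul_le_mul_of_nonneg_left hx1 (norm_nonneg K)
    _ ≤ ‖K‖ + 1 := by linarith [norm_nonneg K]
  obtain ⟨y, hy, hKxy⟩ := Set.mem_iUnion₂.1 (htcov hKx)
  refine Set.mem_iUnion₂.2 ⟨y, htf.mem_toFinset.2 hy, ?_⟩
  rw [Metric.mem_ball] at hKxy ⊢
  calc dist (L x) y ≤ dist (L x) (K x) + dist (K x) y := dist_triangle _ _ _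
  _ < ‖L - K‖ + ε := by
      refine add_lt_add_of_le_of_lt ?_ hKxy
      rw [dist_eq_norm]
      calc ‖L x - K x‖ = ‖(L - K) x‖ := by simp
      _ ≤ ‖L - K‖ * ‖x‖ := (L - K).le_opNorm x
      _ ≤ ‖L - K‖ * 1 := mul_le_mul_of_nonneg_left hx1 (norm_nonneg _)
      _ = ‖L - K‖ := mul_one _

lemma mem_prods_iff {R : Type*} [NormedRing R] {A : Set R} {n : ℕ} {P : R} :
    P ∈ prods A n ↔ ∃ l : List R, l.length = n ∧ (∀ x ∈ l, x ∈ A) ∧ P = l.prod := by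
  constructor
  · rintro ⟨f, hf, rfl⟩
    exact ⟨List.ofFn f, List.length_ofFn, fun x hx => by
      obtain ⟨i, rfl⟩ := List.mem_ofFn.1 hx; exact hf i, rfl⟩
  · rintro ⟨l, rfl, hl, rfl⟩
    exact ⟨l.get, fun i => hl _ (l.get_mem i), by rw [List.ofFn_get]⟩

lemma prods_nonempty {R : Type*} [NormedRing R] {A : Set R} (hne : A.Nonempty) (n : ℕ) :
    (prods A n).Nonempty := by
  obtain ⟨a, ha⟩ := hne
  exact ⟨_, fun _ : Fin n => a, fun _ => ha, rfl⟩

lemma prods_mul {R : Type*} [NormedRing R] {A : Set R} {a b : ℕ} {P Q : R}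
    (hP : P ∈ prods A a) (hQ : Q ∈ prods A b) : P * Q ∈ prods A (a + b) := by
  rw [mem_prods_iff] at hP hQ ⊢
  obtain ⟨l1, hl1, hm1, rfl⟩ := hP
  obtain ⟨l2, hl2, hm2, rfl⟩ := hQ
  exact ⟨l1 ++ l2, by simp [hl1, hl2], fun x hx => by
    rcases List.mem_append.1 hx with h | h
    exacts [hm1 x h, hm2 x h], (List.prod_append).symm⟩

lemma prods_one {R : Type*} [NormedRing R] {A : Set R} : prods A 1 = A := by
  ext P
  rw [mem_prods_iff]
  constructor
  · rintro ⟨l, hl, hm, rfl⟩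
    match l, hl with
    | [x], _ => simpa using hm x (by simp)
  · intro h
    exact ⟨[P], rfl, by simpa using h, by simp⟩

lemma prods_mul_subset {R : Type*} [NormedRing R] {A : Set R} {m n : ℕ} {P : R}
    (h : P ∈ prods A (n * m)) : P ∈ prods (prods A m) n := by
  induction n generalizing P with
  | zero =>
    rw [mem_prods_iff] at h
    obtain ⟨l, hl, -, rfl⟩ := h
    have : l = [] := List.length_eq_zero_iff.1 (by omega)
    subst this
    rw [mem_prods_iff]
    exact ⟨[], rfl, by simp, rfl⟩
  | succ n ih =>
    rw [mem_prods_iff] at h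
    obtain ⟨l, hl, hm, rfl⟩ := h
    have hsplit : l = l.take (n * m) ++ l.drop (n * m) := (List.take_append_drop _ l).symm
    have h1 : (l.take (n * m)).prod ∈ prods A (n * m) := by
      rw [mem_prods_iff]
      exact ⟨l.take (n * m), by rw [List.length_take, hl]; exact min_eq_left (by nlinarith),
        fun x hx => hm x (List.mem_of_mem_take hx), rfl⟩
    have h2 : (l.drop (n * m)).prod ∈ prods A m := by
      rw [mem_prods_iff]
      exact ⟨l.drop (n * m), by rw [List.length_drop, hl, Nat.succ_mul, Nat.add_sub_cancel_left],
        fun x hx => hm x (List.mem_of_mem_drop hx), rfl⟩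
    have h2' : (l.drop (n * m)).prod ∈ prods (prods A m) 1 := by
      rw [prods_one]; exact h2
    have := prods_mul (ih h1) h2'
    rw [hsplit, List.prod_append]
    exact this

lemma norm_list_prod_le {M : ℝ} (hM1 : 1 ≤ M) (l : List (𝕏 →L[ℝ] 𝕏)) :
    (∀ x ∈ l, ‖x‖ ≤ M) → ‖l.prod‖ ≤ M ^ l.length := by
  induction l with
  | nil =>
    intro _
    simp only [List.prod_nil, List.length_nil, pow_zero]
    rw [show (1 : 𝕏 →L[ℝ] 𝕏) = ContinuousLinearMap.id ℝ 𝕏 from rfl]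
    exact ContinuousLinearMap.norm_id_le
  | cons a t ih =>
    intro hm
    simp only [List.prod_cons, List.length_cons]
    calc ‖a * t.prod‖ ≤ ‖a‖ * ‖t.prod‖ := norm_mul_le _ _
    _ ≤ M * M ^ t.length := by
        refine mul_le_mul (hm a (List.mem_cons_self))
          (ih fun x hx => hm x (List.mem_cons_of_mem _ hx)) (norm_nonneg _) (by linarith)
    _ = M ^ (t.length + 1) := (pow_succ' M _).symm

lemma norm_prods_le {A : Set (𝕏 →L[ℝ] 𝕏)} {M : ℝ} (hM1 : 1 ≤ M)
    (hA : ∀ a ∈ A, ‖a‖ ≤ M) {n : ℕ} {P : 𝕏 →L[ℝ] 𝕏} (h : P ∈ prods A n) : ‖P‖ ≤ M ^ n := by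
  rw [mem_prods_iff] at h
  obtain ⟨l, rfl, hm, rfl⟩ := h
  exact norm_list_prod_le hM1 l fun x hx => hA x (hm x hx)

lemma rpow_image_le {A : Set (𝕏 →L[ℝ] 𝕏)} {M : ℝ} (hM1 : 1 ≤ M) (hA : ∀ a ∈ A, ‖a‖ ≤ M)
    {g : (𝕏 →L[ℝ] 𝕏) → ℝ} (hg0 : ∀ L, 0 ≤ g L) (hgn : ∀ L, g L ≤ ‖L‖) (n : ℕ) :
    ∀ x ∈ (fun P => g P ^ (1 / (n : ℝ))) '' prods A n, x ≤ M := by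
  rintro x ⟨P, hP, rfl⟩
  rcases Nat.eq_zero_or_pos n with rfl | hn
  · simpa [Real.rpow_zero] using hM1
  · have hM0 : (0 : ℝ) ≤ M := le_trans zero_le_one hM1
    have h1 : g P ≤ M ^ n := le_trans (hgn P) (norm_prods_le hM1 hA hP)
    have h2 : g P ^ (1 / (n : ℝ)) ≤ (M ^ n) ^ (1 / (n : ℝ)) :=
      Real.rpow_le_rpow (hg0 P) h1 (by positivity)
    have h3 : (M ^ n) ^ (1 / (n : ℝ)) = M := by
      rw [← Real.rpow_natCast M n, ← Real.rpow_mul hM0,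
        mul_one_div_cancel (by exact_mod_cast hn.ne' : (n : ℝ) ≠ 0), Real.rpow_one]
    exact h3 ▸ h2

lemma hmnc_le_norm (L : 𝕏 →L[ℝ] 𝕏) : hmnc L ≤ ‖L‖ :=
  le_trans (hmnc_le_fdist L) (fdist_le_norm L)

lemma sSup_chi_le_sSup_f {A : Set (𝕏 →L[ℝ] 𝕏)} (hne : A.Nonempty) {M : ℝ} (hM1 : 1 ≤ M)
    (hA : ∀ a ∈ A, ‖a‖ ≤ M) (n : ℕ) :
    sSup ((fun P => hmnc P ^ (1 / (n : ℝ))) '' prods A n) ≤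
      sSup ((fun P => fdist P ^ (1 / (n : ℝ))) '' prods A n) := by
  have hbddf : BddAbove ((fun P => fdist P ^ (1 / (n : ℝ))) '' prods A n) :=
    ⟨M, fun x hx => rpow_image_le hM1 hA fdist_nonneg fdist_le_norm n x hx⟩
  refine Real.sSup_le ?_ ?_
  · rintro x ⟨P, hP, rfl⟩
    refine le_trans (Real.rpow_le_rpow (hmnc_nonneg P) (hmnc_le_fdist P) (by positivity)) ?_
    exact le_csSup hbddf ⟨P, hP, rfl⟩
  · obtain ⟨P, hP⟩ := prods_nonempty hne n
    exact le_trans (Real.rpow_nonneg (fdist_nonneg P) _) (le_csSup hbddf ⟨P, hP, rfl⟩)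


lemma auerbach (W : Type*) [NormedAddCommGroup W] [NormedSpace ℝ W] [FiniteDimensional ℝ W] :
    ∃ (e : Fin (Module.finrank ℝ W) → W) (f : Fin (Module.finrank ℝ W) → (W →L[ℝ] ℝ)),
      (∀ i, ‖e i‖ = 1) ∧ (∀ i, ‖f i‖ ≤ 1) ∧ ∀ w : W, (∑ i, f i w • e i) = w := by
  set d := Module.finrank ℝ W with hd
  rcases Nat.eq_zero_or_pos d with hd0 | hdpos
  · haveI : Subsingleton W := Module.finrank_zero_iff.mp (by rw [← hd]; exact hd0)
    refine ⟨fun _ => 0, fun _ => 0, ?_, ?_, ?_⟩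
    · intro i; exact absurd i.isLt (by omega)
    · intro i; exact absurd i.isLt (by omega)
    · intro w; exact Subsingleton.elim _ _
  · haveI : Nonempty (Fin d) := ⟨⟨0, hdpos⟩⟩
    set b : Module.Basis (Fin d) ℝ W := Module.finBasis ℝ W
    -- the determinant function is continuous
    have hcont : Continuous fun v : Fin d → W => b.det v := by
      have : ∀ v : Fin d → W, b.det v = Matrix.det (fun i j => b.coord i (v j)) := by
        intro v; rw [Module.Basis.det_apply]; rfl
      simp_rw [this]
      exact Continuous.matrix_det <| continuous_matrix fun i j =>
        ((b.coord i).continuous_of_finiteDimensional).comp (continuous_apply j)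
    have hcontabs : Continuous fun v : Fin d → W => |b.det v| := hcont.abs
    -- the domain: product of unit spheres
    set D : Set (Fin d → W) := Set.univ.pi fun _ => Metric.sphere (0 : W) 1 with hD
    have hDc : IsCompact D := isCompact_univ_pi fun _ => isCompact_sphere 0 1
    have memD : ∀ v : Fin d → W, (∀ i, ‖v i‖ = 1) → v ∈ D := by
      intro v hv
      intro i _
      simpa [mem_sphere_iff_norm] using hv i
    have hDne : D.Nonempty := by
      refine ⟨fun i => ‖b i‖⁻¹ • b i, memD _ fun i => ?_⟩
      rw [norm_smul, norm_inv, norm_norm, inv_mul_cancel₀ (norm_ne_zero_iff.2 (b.ne_zero i))]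
    obtain ⟨e, heD, hmax⟩ := hDc.exists_isMaxOn hDne hcontabs.continuousOn
    have hmax' : ∀ v ∈ D, |b.det v| ≤ |b.det e| := fun v hv => hmax hv
    have he1 : ∀ i, ‖e i‖ = 1 := by
      intro i
      have := (Set.mem_univ_pi.1 heD) i
      simpa [mem_sphere_iff_norm] using this
    -- the maximum is positive
    have hdet0 : b.det e ≠ 0 := by
      intro h0
      have hv0 : b.det (fun i => ‖b i‖⁻¹ • b i) = (∏ i, ‖b i‖⁻¹) • b.det ⇑b := by
        exact b.det.toMultilinearMap.map_smul_univ _ _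
      rw [Module.Basis.det_self, smul_eq_mul, mul_one] at hv0
      have hne : (∏ i : Fin d, ‖b i‖⁻¹) ≠ 0 :=
        Finset.prod_ne_zero_iff.2 fun i _ =>
          inv_ne_zero (norm_ne_zero_iff.2 (b.ne_zero i))
      have hv0mem : (fun i => ‖b i‖⁻¹ • b i) ∈ D := by
        refine memD _ fun i => ?_
        rw [norm_smul, norm_inv, norm_norm, inv_mul_cancel₀ (norm_ne_zero_iff.2 (b.ne_zero i))]
      have hle := hmax' _ hv0mem
      rw [h0, abs_zero, hv0] at hle
      exact absurd (le_antisymm hle (abs_nonneg _)) (abs_ne_zero.2 hne)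
    -- linear independence of the extremal family
    have hli : LinearIndependent ℝ e := by
      by_contra hnli
      exact hdet0 (b.det.map_linearDependent e hnli)
    have hcard : Fintype.card (Fin d) = Module.finrank ℝ W := by simp [hd]
    set eb : Module.Basis (Fin d) ℝ W := basisOfLinearIndependentOfCardEqFinrank hli hcard with heb
    have hebe : ⇑eb = e := coe_basisOfLinearIndependentOfCardEqFinrank hli hcard
    -- the coordinate functionals
    classical
    set flin : Fin d → W →ₗ[ℝ] ℝ :=
      fun i => (b.det e)⁻¹ • b.det.toMultilinearMap.toLinearMap e i with hflin
    have hflin_apply : ∀ i x, flin i x = (b.det e)⁻¹ * b.det (Function.update e i x) := by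
      intro i x; simp [hflin]
    have hbound : ∀ i x, ‖flin i x‖ ≤ 1 * ‖x‖ := by
      intro i x
      rcases eq_or_ne x 0 with rfl | hx
      · simp
      · have hu : ‖(‖x‖⁻¹ • x : W)‖ = 1 := by
          rw [norm_smul, norm_inv, norm_norm, inv_mul_cancel₀ (norm_ne_zero_iff.2 hx)]
        have hmem : Function.update e i (‖x‖⁻¹ • x) ∈ D := by
          refine memD _ fun j => ?_
          rcases eq_or_ne j i with rfl | hj
          · rw [Function.update_self]; exact hu
          · rw [Function.update_of_ne hj]; exact he1 j
        have h1 : |flin i (‖x‖⁻¹ • x)| ≤ 1 := by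
          rw [hflin_apply, abs_mul, abs_inv]
          calc |b.det e|⁻¹ * |b.det (Function.update e i (‖x‖⁻¹ • x))|
              ≤ |b.det e|⁻¹ * |b.det e| := by
                refine mul_le_mul_of_nonneg_left (hmax' _ hmem) (by positivity)
          _ = 1 := inv_mul_cancel₀ (abs_ne_zero.2 hdet0)
        have hxx : x = ‖x‖ • (‖x‖⁻¹ • x) := by
          rw [smul_smul, mul_inv_cancel₀ (norm_ne_zero_iff.2 hx), one_smul]
        calc ‖flin i x‖ = ‖flin i (‖x‖ • (‖x‖⁻¹ • x))‖ := by rw [← hxx]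
        _ = ‖x‖ * ‖flin i (‖x‖⁻¹ • x)‖ := by
            rw [_root_.map_smul, smul_eq_mul]; rw [norm_mul, norm_norm]
        _ ≤ ‖x‖ * 1 := by
            refine mul_le_mul_of_nonneg_left ?_ (norm_nonneg x)
            rw [Real.norm_eq_abs]; exact h1
        _ = 1 * ‖x‖ := by ring
    set f : Fin d → W →L[ℝ] ℝ := fun i => (flin i).mkContinuous 1 (hbound i) with hf
    have hfnorm : ∀ i, ‖f i‖ ≤ 1 := fun i => (flin i).mkContinuous_norm_le zero_le_one (hbound i)
    -- the coordinate functionals are dual to the basis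
    have hdual : ∀ i, flin i = eb.coord i := by
      intro i
      refine eb.ext fun j => ?_
      rw [hebe]
      rcases eq_or_ne j i with rfl | hj
      · rw [hflin_apply, Function.update_eq_self, inv_mul_cancel₀ hdet0]
        simp [Module.Basis.coord_apply, ← hebe]
      · have : Function.update e i (e j) i = Function.update e i (e j) j := by
          rw [Function.update_self, Function.update_of_ne hj]
        have hz : b.det (Function.update e i (e j)) = 0 :=
          b.det.map_eq_zero_of_eq _ this (fun h => hj h.symm)
        rw [hflin_apply, hz, mul_zero]
        rw [Module.Basis.coord_apply, ← hebe, eb.repr_self, Finsupp.single_apply, if_neg hj]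
    refine ⟨e, f, he1, hfnorm, fun w => ?_⟩
    have : ∀ i, f i w = eb.repr w i := by
      intro i
      have : f i w = flin i w := rfl
      rw [this, hdual i, Module.Basis.coord_apply]
    calc (∑ i, f i w • e i) = ∑ i, eb.repr w i • eb i := by
          refine Finset.sum_congr rfl fun i _ => ?_
          rw [this i, hebe]
    _ = w := eb.sum_repr w


lemma exists_projection (U : Finset 𝕏) :
    ∃ Proj : 𝕏 →L[ℝ] 𝕏, ‖Proj‖ ≤ (U.card : ℝ) ∧
      (∀ z ∈ Submodule.span ℝ (U : Set 𝕏), Proj z = z) ∧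
      (∀ x : 𝕏, Proj x ∈ Submodule.span ℝ (U : Set 𝕏)) := by
  set W : Submodule ℝ 𝕏 := Submodule.span ℝ (U : Set 𝕏) with hW
  haveI : FiniteDimensional ℝ W := FiniteDimensional.span_finset ℝ U
  set d := Module.finrank ℝ W with hd
  obtain ⟨e, f, he1, hf1, hrepr⟩ := auerbach W
  -- extend the functionals to all of 𝕏 by Hahn–Banach
  have hext : ∀ i : Fin d, ∃ g : 𝕏 →L[ℝ] ℝ, (∀ x : W, g x = f i x) ∧ ‖g‖ = ‖f i‖ :=
    fun i => exists_extension_norm_eq W (f i)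
  choose g hg hgnorm using hext
  refine ⟨∑ i, (g i).smulRight ((e i : 𝕏)), ?_, ?_, ?_⟩
  · have hd_le : (d : ℝ) ≤ (U.card : ℝ) := by
      have : d ≤ U.card := by
        rw [hd, hW]
        exact finrank_span_finset_le_card U
      exact_mod_cast this
    refine le_trans (ContinuousLinearMap.opNorm_le_bound _ (by positivity) fun x => ?_) hd_le
    calc ‖(∑ i, (g i).smulRight ((e i : 𝕏))) x‖ = ‖∑ i, g i x • (e i : 𝕏)‖ := by
          simp [ContinuousLinearMap.sum_apply, ContinuousLinearMap.smulRight_apply]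
    _ ≤ ∑ i, ‖g i x • (e i : 𝕏)‖ := norm_sum_le _ _
    _ ≤ ∑ i, ‖x‖ := by
        refine Finset.sum_le_sum fun i _ => ?_
        rw [norm_smul]
        have h1 : ‖(e i : 𝕏)‖ = 1 := by rw [← he1 i]; rfl
        rw [h1, mul_one]
        calc ‖g i x‖ ≤ ‖g i‖ * ‖x‖ := (g i).le_opNorm x
        _ ≤ 1 * ‖x‖ := mul_le_mul_of_nonneg_right (le_trans (le_of_eq (hgnorm i)) (hf1 i))
            (norm_nonneg x)
        _ = ‖x‖ := one_mul _
    _ = (d : ℝ) * ‖x‖ := by rw [Finset.sum_const, Finset.card_univ, Fintype.card_fin,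
          nsmul_eq_mul]
  · intro z hz
    have key : (∑ i, (g i).smulRight ((e i : 𝕏))) z = ((∑ i, f i ⟨z, hz⟩ • e i : W) : 𝕏) := by
      rw [Submodule.coe_sum]
      simp only [ContinuousLinearMap.sum_apply, ContinuousLinearMap.smulRight_apply]
      refine Finset.sum_congr rfl fun i _ => ?_
      rw [SetLike.val_smul, hg i ⟨z, hz⟩]
    rw [key, hrepr ⟨z, hz⟩]
  · intro x
    simp only [ContinuousLinearMap.sum_apply, ContinuousLinearMap.smulRight_apply]
    exact Submodule.sum_mem _ fun i _ => Submodule.smul_mem _ _ (e i).2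

lemma uniform_net {B : Set (𝕏 →L[ℝ] 𝕏)} (hBc : IsCompact (closure B)) {r R : ℝ}
    (hr0 : 0 < r) (hrR : r < R) (hr : ∀ Q ∈ B, hmnc Q < r) :
    ∃ Y : Finset 𝕏, ∀ Q ∈ B, ∀ x ∈ Metric.closedBall (0 : 𝕏) 1, ∃ y ∈ Y, ‖Q x - y‖ < R := by
  classical
  set δ := R - r with hδ
  have hδ0 : 0 < δ := by simp [hδ]; linarith
  -- finite subcover of the closure by δ-balls centered in B
  have hcov : closure B ⊆ ⋃ i : {Q // Q ∈ B}, Metric.ball (i : 𝕏 →L[ℝ] 𝕏) δ := by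
    intro z hz
    obtain ⟨Q, hQ, hd⟩ := Metric.mem_closure_iff.1 hz δ hδ0
    exact Set.mem_iUnion.2 ⟨⟨Q, hQ⟩, by simpa [Metric.mem_ball] using hd⟩
  obtain ⟨t, ht⟩ := hBc.elim_finite_subcover _ (fun i => Metric.isOpen_ball) hcov
  -- a net for each center
  have hnet : ∀ i : {Q // Q ∈ B}, ∃ S : Finset 𝕏,
      ∀ x ∈ Metric.closedBall (0 : 𝕏) 1, ∃ y ∈ S, ‖(i : 𝕏 →L[ℝ] 𝕏) x - y‖ < r := by
    intro i
    have hlt : hmnc (i : 𝕏 →L[ℝ] 𝕏) < r := hr _ i.2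
    rw [hmnc] at hlt
    obtain ⟨ε, ⟨hε0, S, hS⟩, hεr⟩ := (csInf_lt_iff (hmnc_bddBelow _) (hmnc_setNe _)).1 hlt
    refine ⟨S, fun x hx => ?_⟩
    obtain ⟨y, hy, hxy⟩ := Set.mem_iUnion₂.1 (hS ⟨x, hx, rfl⟩)
    exact ⟨y, hy, lt_trans (by simpa [Metric.mem_ball, dist_eq_norm] using hxy) hεr⟩
  choose Snet hSnet using hnet
  refine ⟨t.biUnion Snet, fun Q hQ x hx => ?_⟩
  obtain ⟨i, hit, hQi⟩ := Set.mem_iUnion₂.1 (ht (subset_closure hQ))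
  have hQi' : ‖Q - (i : 𝕏 →L[ℝ] 𝕏)‖ < δ := by
    simpa [Metric.mem_ball, dist_eq_norm] using hQi
  obtain ⟨y, hy, hxy⟩ := hSnet i x hx
  refine ⟨y, Finset.mem_biUnion.2 ⟨i, hit, hy⟩, ?_⟩
  have hx1 : ‖x‖ ≤ 1 := by simpa [Metric.mem_closedBall, dist_zero_right] using hx
  calc ‖Q x - y‖ ≤ ‖Q x - (i : 𝕏 →L[ℝ] 𝕏) x‖ + ‖(i : 𝕏 →L[ℝ] 𝕏) x - y‖ := by
        have : Q x - y = (Q x - (i : 𝕏 →L[ℝ] 𝕏) x) + ((i : 𝕏 →L[ℝ] 𝕏) x - y) := by abel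
        rw [this]; exact norm_add_le _ _
  _ < δ + r := by
      refine add_lt_add_of_le_of_lt ?_ hxy
      calc ‖Q x - (i : 𝕏 →L[ℝ] 𝕏) x‖ = ‖(Q - (i : 𝕏 →L[ℝ] 𝕏)) x‖ := by simp
      _ ≤ ‖Q - (i : 𝕏 →L[ℝ] 𝕏)‖ * ‖x‖ := (Q - _).le_opNorm x
      _ ≤ ‖Q - (i : 𝕏 →L[ℝ] 𝕏)‖ * 1 := mul_le_mul_of_nonneg_left hx1 (norm_nonneg _)
      _ ≤ δ := by rw [mul_one]; exact le_of_lt hQi'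
  _ = R := by rw [hδ]; ring

lemma opNorm_le_of_unit_ball (T : 𝕏 →L[ℝ] 𝕏) {c : ℝ} (hc : 0 ≤ c)
    (h : ∀ x ∈ Metric.closedBall (0 : 𝕏) 1, ‖T x‖ ≤ c) : ‖T‖ ≤ c := by
  refine T.opNorm_le_bound hc fun x => ?_
  rcases eq_or_ne x 0 with rfl | hx
  · simp
  · have hu : ‖(‖x‖⁻¹ • x : 𝕏)‖ = 1 := by
      rw [norm_smul, norm_inv, norm_norm, inv_mul_cancel₀ (norm_ne_zero_iff.2 hx)]
    have humem : (‖x‖⁻¹ • x : 𝕏) ∈ Metric.closedBall (0 : 𝕏) 1 := by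
      simp [Metric.mem_closedBall, dist_zero_right, hu]
    have hxx : x = ‖x‖ • (‖x‖⁻¹ • x) := by
      rw [smul_smul, mul_inv_cancel₀ (norm_ne_zero_iff.2 hx), one_smul]
    calc ‖T x‖ = ‖T (‖x‖ • (‖x‖⁻¹ • x))‖ := by rw [← hxx]
    _ = ‖x‖ * ‖T (‖x‖⁻¹ • x)‖ := by rw [_root_.map_smul, norm_smul, norm_norm]
    _ ≤ ‖x‖ * c := mul_le_mul_of_nonneg_left (h _ humem) (norm_nonneg x)
    _ = c * ‖x‖ := by ring

lemma net_iter {B : Set (𝕏 →L[ℝ] 𝕏)} {Y : Finset 𝕏} {σ : ℝ} (hσ : 0 < σ)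
    (hY : ∀ Q ∈ B, ∀ x ∈ Metric.closedBall (0 : 𝕏) 1, ∃ y ∈ Y, ‖Q x - y‖ < σ) :
    ∀ l : List (𝕏 →L[ℝ] 𝕏), l ≠ [] → (∀ Q ∈ l, Q ∈ B) →
      ∃ U : Finset 𝕏, U.card ≤ l.length * Y.card ∧
        ∀ x ∈ Metric.closedBall (0 : 𝕏) 1, ∃ z ∈ Submodule.span ℝ (U : Set 𝕏),
          ‖l.prod x - z‖ < σ ^ l.length := by
  classical
  intro l
  induction l with
  | nil => intro h; exact absurd rfl h
  | cons Q l' ih =>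
    intro _ hmem
    have hQB : Q ∈ B := hmem Q (List.mem_cons_self)
    rcases eq_or_ne l' [] with rfl | hl'
    · refine ⟨Y, by simp, fun x hx => ?_⟩
      obtain ⟨y, hy, hxy⟩ := hY Q hQB x hx
      refine ⟨y, Submodule.subset_span (by simpa using hy), ?_⟩
      simpa using hxy
    · obtain ⟨U', hcard', hcov'⟩ := ih hl' fun R hR => hmem R (List.mem_cons_of_mem _ hR)
      refine ⟨U'.image Q ∪ Y, ?_, fun x hx => ?_⟩
      · calc (U'.image Q ∪ Y).card ≤ (U'.image Q).card + Y.card := Finset.card_union_le _ _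
        _ ≤ U'.card + Y.card := by
            exact Nat.add_le_add_right (Finset.card_image_le) _
        _ ≤ l'.length * Y.card + Y.card := Nat.add_le_add_right hcard' _
        _ = (Q :: l').length * Y.card := by simp [List.length_cons]; ring
      · obtain ⟨z', hz', hwz'⟩ := hcov' x hx
        set w := l'.prod x with hw
        set n' := l'.length with hn'
        have hσn : (0 : ℝ) < σ ^ n' := pow_pos hσ _
        set u := (σ ^ n')⁻¹ • (w - z') with hu
        have humem : u ∈ Metric.closedBall (0 : 𝕏) 1 := by
          rw [Metric.mem_closedBall, dist_zero_right, hu, norm_smul, norm_inv, Real.norm_eq_abs,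
            abs_of_pos hσn]
          rw [inv_mul_le_iff₀ hσn, mul_one]
          exact le_of_lt hwz'
        obtain ⟨y, hy, hQuy⟩ := hY Q hQB u humem
        refine ⟨Q z' + σ ^ n' • y, ?_, ?_⟩
        · have h1 : Q z' ∈ Submodule.span ℝ ((U'.image Q ∪ Y : Finset 𝕏) : Set 𝕏) := by
            have : Q z' ∈ Submodule.map (Q : 𝕏 →ₗ[ℝ] 𝕏) (Submodule.span ℝ (U' : Set 𝕏)) :=
              Submodule.mem_map_of_mem hz'
            rw [Submodule.map_span] at this
            refine Submodule.span_mono ?_ this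
            intro v hv
            obtain ⟨v', hv', rfl⟩ := hv
            simp only [Finset.coe_union, Finset.coe_image, Set.mem_union]
            exact Or.inl ⟨v', hv', rfl⟩
          have h2 : (y : 𝕏) ∈ Submodule.span ℝ ((U'.image Q ∪ Y : Finset 𝕏) : Set 𝕏) :=
            Submodule.subset_span (by simp [hy])
          exact Submodule.add_mem _ h1 (Submodule.smul_mem _ _ h2)
        · have hprod : (Q :: l').prod x = Q w := by
            rw [List.prod_cons, hw, ContinuousLinearMap.mul_apply]
          have hkey : Q w - (Q z' + σ ^ n' • y) = σ ^ n' • (Q u - y) := by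
            have hwz : w - z' = σ ^ n' • u := by
              rw [hu, smul_smul, mul_inv_cancel₀ (ne_of_gt hσn), one_smul]
            have : Q w - Q z' = σ ^ n' • Q u := by
              rw [← map_sub, hwz, _root_.map_smul]
            rw [smul_sub, ← this]; abel
          rw [hprod, hkey, norm_smul, Real.norm_eq_abs, abs_of_pos hσn]
          calc σ ^ n' * ‖Q u - y‖ < σ ^ n' * σ := by
                exact mul_lt_mul_of_pos_left hQuy hσn
          _ = σ ^ (Q :: l').length := by rw [List.length_cons, pow_succ]

lemma fdist_prods_le {B : Set (𝕏 →L[ℝ] 𝕏)} {Y : Finset 𝕏} {σ : ℝ} (hσ : 0 < σ)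
    (hY : ∀ Q ∈ B, ∀ x ∈ Metric.closedBall (0 : 𝕏) 1, ∃ y ∈ Y, ‖Q x - y‖ < σ)
    {n : ℕ} (hn : 1 ≤ n) {P : 𝕏 →L[ℝ] 𝕏} (hP : P ∈ prods B n) :
    fdist P ≤ (1 + n * Y.card) * σ ^ n := by
  rw [mem_prods_iff] at hP
  obtain ⟨l, rfl, hmem, rfl⟩ := hP
  have hlne : l ≠ [] := by
    intro h; rw [h] at hn; simp at hn
  obtain ⟨U, hUcard, hUcov⟩ := net_iter hσ hY l hlne hmem
  obtain ⟨Proj, hPnorm, hPfix, hPrange⟩ := exists_projection U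
  have hrange : FiniteDimensional ℝ
      (LinearMap.range ((Proj.comp l.prod : 𝕏 →L[ℝ] 𝕏) : 𝕏 →ₗ[ℝ] 𝕏)) := by
    have hle : LinearMap.range ((Proj.comp l.prod : 𝕏 →L[ℝ] 𝕏) : 𝕏 →ₗ[ℝ] 𝕏) ≤
        Submodule.span ℝ (U : Set 𝕏) := by
      rintro v ⟨x, rfl⟩
      exact hPrange _
    haveI : FiniteDimensional ℝ (Submodule.span ℝ (U : Set 𝕏)) :=
      FiniteDimensional.span_finset ℝ U
    exact Submodule.finiteDimensional_of_le hle
  refine le_trans (fdist_le hrange) ?_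
  have hc0 : (0 : ℝ) ≤ (1 + l.length * Y.card) * σ ^ l.length := by positivity
  refine opNorm_le_of_unit_ball _ hc0 fun x hx => ?_
  obtain ⟨z, hz, hxz⟩ := hUcov x hx
  have hPz : Proj z = z := hPfix z hz
  have hdecomp : (l.prod - Proj.comp l.prod) x = (l.prod x - z) - Proj (l.prod x - z) := by
    simp only [ContinuousLinearMap.sub_apply, ContinuousLinearMap.comp_apply, map_sub, hPz]
    abel
  rw [hdecomp]
  calc ‖(l.prod x - z) - Proj (l.prod x - z)‖
      ≤ ‖l.prod x - z‖ + ‖Proj (l.prod x - z)‖ := norm_sub_le _ _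
  _ ≤ ‖l.prod x - z‖ + ‖Proj‖ * ‖l.prod x - z‖ := by
      exact add_le_add_right (Proj.le_opNorm _) _
  _ = (1 + ‖Proj‖) * ‖l.prod x - z‖ := by ring
  _ ≤ (1 + U.card) * ‖l.prod x - z‖ := by
      refine mul_le_mul_of_nonneg_right (add_le_add_right hPnorm _) (norm_nonneg _)
  _ ≤ (1 + U.card) * σ ^ l.length := by
      refine mul_le_mul_of_nonneg_left (le_of_lt hxz) (by positivity)
  _ ≤ (1 + l.length * Y.card) * σ ^ l.length := by
      refine mul_le_mul_of_nonneg_right ?_ (le_of_lt (pow_pos hσ _))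
      have : (U.card : ℝ) ≤ (l.length * Y.card : ℕ) := by exact_mod_cast hUcard
      push_cast at this ⊢
      linarith

lemma prods_closure_isCompact {A : Set (𝕏 →L[ℝ] 𝕏)} (hpc : IsCompact (closure A)) (m : ℕ) :
    IsCompact (closure (prods A m)) := by
  have hΦ : Continuous fun f : Fin m → (𝕏 →L[ℝ] 𝕏) => (List.ofFn f).prod := by
    have : ∀ f : Fin m → (𝕏 →L[ℝ] 𝕏), (List.ofFn f).prod =
        ((List.finRange m).map fun i => f i).prod := by
      intro f; rw [List.ofFn_eq_map]
    simp_rw [this]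
    exact continuous_list_prod _ fun i _ => continuous_apply i
  have hdom : IsCompact (Set.univ.pi fun _ : Fin m => closure A) :=
    isCompact_univ_pi fun _ => hpc
  have himg : IsCompact ((fun f : Fin m → (𝕏 →L[ℝ] 𝕏) => (List.ofFn f).prod) ''
      (Set.univ.pi fun _ => closure A)) := hdom.image hΦ
  have hsub : prods A m ⊆ (fun f : Fin m → (𝕏 →L[ℝ] 𝕏) => (List.ofFn f).prod) ''
      (Set.univ.pi fun _ => closure A) := by
    rintro P ⟨f, hf, rfl⟩
    exact ⟨f, fun i _ => subset_closure (hf i), rfl⟩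
  exact IsCompact.of_isClosed_subset himg isClosed_closure
    (closure_minimal hsub himg.isClosed)

lemma tendsto_one_add_rpow (N m : ℕ) (hm : 1 ≤ m) :
    Tendsto (fun n : ℕ => ((1 : ℝ) + n * N) ^ (1 / ((n * m : ℕ) : ℝ))) atTop (nhds 1) := by
  have hub : Tendsto (fun n : ℕ => (Real.log (1 + N) + Real.log n) / (n : ℝ)) atTop (nhds 0) := by
    have t1 : Tendsto (fun n : ℕ => Real.log (1 + N) / (n : ℝ)) atTop (nhds 0) :=
      tendsto_const_div_atTop_nhds_zero_nat _
    have t2 : Tendsto (fun n : ℕ => Real.log n / (n : ℝ)) atTop (nhds 0) :=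
      (Real.isLittleO_log_id_atTop.tendsto_div_nhds_zero).comp tendsto_natCast_atTop_atTop
    have := t1.add t2
    rw [add_zero] at this
    refine this.congr fun n => ?_
    rw [← add_div]
  have hlog : Tendsto (fun n : ℕ => Real.log (1 + n * N) / ((n * m : ℕ) : ℝ)) atTop (nhds 0) := by
    refine tendsto_of_tendsto_of_tendsto_of_le_of_le' tendsto_const_nhds hub ?_ ?_
    · filter_upwards [eventually_ge_atTop 1] with n hn
      have hn0 : (0 : ℝ) < n := by exact_mod_cast hn
      have hnm0 : (0 : ℝ) < ((n * m : ℕ) : ℝ) := by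
        have : 0 < n * m := Nat.mul_pos hn hm
        exact_mod_cast this
      have hlog0 : 0 ≤ Real.log (1 + n * N) := Real.log_nonneg (le_add_of_nonneg_right (by positivity))
      exact div_nonneg hlog0 (le_of_lt hnm0)
    · filter_upwards [eventually_ge_atTop 1] with n hn
      have hn0 : (0 : ℝ) < n := by exact_mod_cast hn
      have hn1 : (1 : ℝ) ≤ n := by exact_mod_cast hn
      have hm1 : (1 : ℝ) ≤ m := by exact_mod_cast hm
      have h1 : (1 : ℝ) + n * N ≤ (1 + N) * n := by
        nlinarith [Nat.cast_nonneg (α := ℝ) N]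
      have hpos : (0 : ℝ) < 1 + n * N := by positivity
      have hlog_le : Real.log (1 + n * N) ≤ Real.log (1 + N) + Real.log n := by
        refine le_trans (Real.log_le_log hpos h1) ?_
        rw [Real.log_mul (by positivity) (ne_of_gt hn0)]
      have hnm : (n : ℝ) ≤ ((n * m : ℕ) : ℝ) := by
        push_cast; nlinarith
      have hnum0 : 0 ≤ Real.log (1 + N) + Real.log n :=
        add_nonneg (Real.log_nonneg (le_add_of_nonneg_right (by positivity))) (Real.log_nonneg hn1)
      exact div_le_div₀ hnum0 hlog_le hn0 hnm
  have hexp := (Real.continuous_exp.tendsto 0).comp hlog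
  rw [Real.exp_zero] at hexp
  refine hexp.congr' ?_
  filter_upwards [eventually_ge_atTop 1] with n hn
  have hpos : (0 : ℝ) < 1 + (n : ℝ) * N := by positivity
  show Real.exp (Real.log (1 + n * N) / ((n * m : ℕ) : ℝ)) =
    ((1 : ℝ) + n * N) ^ (1 / ((n * m : ℕ) : ℝ))
  rw [Real.rpow_def_of_pos hpos, mul_one_div]


/-- For a nonempty precompact set `A` of bounded operators on a Banach space `𝕏`,
`ρ_χ(A) = ρ_f(A)`.  The limits defining `ρ_χ(A)` and `ρ_f(A)` exist by submultiplicativity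
and are given here as hypotheses `hχ`, `hf`. -/
theorem chi_radius_eq_f_radius (A : Set (𝕏 →L[ℝ] 𝕏)) (hne : A.Nonempty)
    (hpc : IsCompact (closure A)) (ρχ ρf : ℝ)
    (hχ : Tendsto (fun n : ℕ => sSup ((fun P => hmnc P ^ (1 / (n : ℝ))) '' prods A n))
      atTop (nhds ρχ))
    (hf : Tendsto (fun n : ℕ => sSup ((fun P => fdist P ^ (1 / (n : ℝ))) '' prods A n))
      atTop (nhds ρf)) :
    ρχ = ρf := by
  classical
  obtain ⟨M0, hM0⟩ := hpc.isBounded.exists_norm_le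
  set M : ℝ := max 1 M0 with hM
  have hM1 : (1 : ℝ) ≤ M := le_max_left _ _
  have hA : ∀ a ∈ A, ‖a‖ ≤ M := fun a ha =>
    le_trans (hM0 _ (subset_closure ha)) (le_max_right _ _)
  -- easy direction
  have h1 : ρχ ≤ ρf :=
    le_of_tendsto_of_tendsto' hχ hf fun n => sSup_chi_le_sSup_f hne hM1 hA n
  -- `ρχ ≥ 0`
  have hρχ0 : 0 ≤ ρχ := by
    refine ge_of_tendsto' hχ fun n => ?_
    refine Real.sSup_nonneg ?_
    rintro x ⟨P, hP, rfl⟩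
    exact Real.rpow_nonneg (hmnc_nonneg P) _
  -- hard direction
  have key : ∀ t, ρχ < t → ρf ≤ t := by
    intro t ht
    have ht0 : 0 < t := lt_of_le_of_lt hρχ0 ht
    set t' : ℝ := (ρχ + t) / 2 with ht'def
    have hρt' : ρχ < t' := by rw [ht'def]; linarith
    have ht't : t' < t := by rw [ht'def]; linarith
    have ht'0 : 0 < t' := lt_of_le_of_lt hρχ0 hρt'
    obtain ⟨m, hsupm, hm1⟩ :=
      ((hχ.eventually (gt_mem_nhds hρt')).and (eventually_ge_atTop 1)).exists
    have hm0 : (m : ℝ) ≠ 0 := by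
      have : 0 < m := hm1
      exact_mod_cast this.ne'
    -- every `m`-fold product has small measure of noncompactness
    have hbddχ : BddAbove ((fun P => hmnc P ^ (1 / (m : ℝ))) '' prods A m) :=
      ⟨M, fun x hx => rpow_image_le hM1 hA hmnc_nonneg hmnc_le_norm m x hx⟩
    have hQbound : ∀ Q ∈ prods A m, hmnc Q < t' ^ m := by
      intro Q hQ
      have hlt : hmnc Q ^ (1 / (m : ℝ)) < t' :=
        lt_of_le_of_lt (le_csSup hbddχ ⟨Q, hQ, rfl⟩) hsupm
      have hQ0 : 0 ≤ hmnc Q := hmnc_nonneg Q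
      have hid : (hmnc Q ^ (1 / (m : ℝ))) ^ m = hmnc Q := by
        rw [← Real.rpow_natCast (hmnc Q ^ (1 / (m : ℝ))) m, ← Real.rpow_mul hQ0, one_div,
          inv_mul_cancel₀ hm0, Real.rpow_one]
      calc hmnc Q = (hmnc Q ^ (1 / (m : ℝ))) ^ m := hid.symm
      _ < t' ^ m := pow_lt_pow_left₀ hlt (Real.rpow_nonneg hQ0 _) (by omega)
    have ht'm0 : 0 < t' ^ m := pow_pos ht'0 m
    have hltm : t' ^ m < t ^ m := pow_lt_pow_left₀ ht't (le_of_lt ht'0) (by omega)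
    obtain ⟨Y0, hY0⟩ := uniform_net (prods_closure_isCompact hpc m) ht'm0 hltm hQbound
    set Y : Finset 𝕏 := insert (0 : 𝕏) Y0 with hYdef
    have hY : ∀ Q ∈ prods A m, ∀ x ∈ Metric.closedBall (0 : 𝕏) 1,
        ∃ y ∈ Y, ‖Q x - y‖ < t ^ m := by
      intro Q hQ x hx
      obtain ⟨y, hy, h⟩ := hY0 Q hQ x hx
      exact ⟨y, Finset.mem_insert_of_mem hy, h⟩
    -- bound on the subsequence
    have hseq : ∀ n : ℕ, 1 ≤ n →
        sSup ((fun P => fdist P ^ (1 / ((n * m : ℕ) : ℝ))) '' prods A (n * m)) ≤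
          ((1 : ℝ) + n * Y.card) ^ (1 / ((n * m : ℕ) : ℝ)) * t := by
      intro n hn
      have hnm0 : ((n * m : ℕ) : ℝ) ≠ 0 := by
        have : 0 < n * m := Nat.mul_pos hn hm1
        exact_mod_cast this.ne'
      have hnm0' : (0 : ℝ) < ((n * m : ℕ) : ℝ) := by
        have : 0 < n * m := Nat.mul_pos hn hm1
        exact_mod_cast this
      have hb0 : (0 : ℝ) ≤ ((1 : ℝ) + n * Y.card) ^ (1 / ((n * m : ℕ) : ℝ)) * t := by
        have := Real.rpow_nonneg (x := (1 : ℝ) + n * Y.card) (by positivity)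
          (1 / ((n * m : ℕ) : ℝ))
        nlinarith
      refine Real.sSup_le ?_ hb0
      rintro x ⟨P, hP, rfl⟩
      have hPB : P ∈ prods (prods A m) n := prods_mul_subset hP
      have hfd : fdist P ≤ (1 + n * Y.card) * (t ^ m) ^ n :=
        fdist_prods_le (pow_pos ht0 m) hY hn hPB
      have hrw : ((1 : ℝ) + n * Y.card) ^ (1 / ((n * m : ℕ) : ℝ)) * t =
          (((1 : ℝ) + n * Y.card) * (t ^ m) ^ n) ^ (1 / ((n * m : ℕ) : ℝ)) := by
        rw [Real.mul_rpow (by positivity) (by positivity)]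
        congr 1
        rw [← pow_mul, ← Real.rpow_natCast t (m * n), ← Real.rpow_mul (le_of_lt ht0)]
        rw [show ((m * n : ℕ) : ℝ) * (1 / ((n * m : ℕ) : ℝ)) = 1 by
          rw [Nat.mul_comm m n, mul_one_div, div_self hnm0]]
        rw [Real.rpow_one]
      rw [hrw]
      exact Real.rpow_le_rpow (fdist_nonneg P) hfd (by positivity)
    -- pass to the limit along the subsequence `n ↦ n * m`
    have hmono : Tendsto (fun n : ℕ => n * m) atTop atTop := by
      refine tendsto_atTop_mono (fun n => ?_) tendsto_id
      have := Nat.mul_le_mul_left n hm1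
      simpa using this
    have hsubseq : Tendsto (fun n : ℕ =>
        sSup ((fun P => fdist P ^ (1 / ((n * m : ℕ) : ℝ))) '' prods A (n * m)))
        atTop (nhds ρf) := hf.comp hmono
    have hbnd : Tendsto (fun n : ℕ =>
        ((1 : ℝ) + n * Y.card) ^ (1 / ((n * m : ℕ) : ℝ)) * t) atTop (nhds t) := by
      have := (tendsto_one_add_rpow Y.card m hm1).mul_const t
      rwa [one_mul] at this
    refine le_of_tendsto_of_tendsto hsubseq hbnd ?_
    filter_upwards [eventually_ge_atTop 1] with n hn using hseq n hn
  have h2 : ρf ≤ ρχ := by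
    by_contra hcon
    push_neg at hcon
    have := key ((ρχ + ρf) / 2) (by linarith)
    linarith
  exact le_antisymm h1 h2
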